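/- The set {z = 0, p_z = 0, x·p_y − y·p_x = 0} is invariant under the Kepler-Heisenberg flow: if c is a solution with z(t₀) = 0, p_z(t₀) = 0 and x(t₀)·p_y(t₀) − y(t₀)·p_x(t₀) = 0 at some time t₀, then z(t) = 0, p_z(t) = 0 and x(t)·p_y(t) − y(t)·p_x(t) = 0 for all t in the interval of definition. -/

import Mathlib

/-- `P_X = p_x - (1/2) y p_z`, where phase space coordinates are
`(x, y, z, p_x, p_y, p_z) = (p 0, p 1, p 2, p 3, p 4, p 5)`. -/
noncomputable def PX (p : Fin 6 → ℝ) : ℝ := p 3 - (1/2) * p 1 * p 5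

/-- `P_Y = p_y + (1/2) x p_z`. -/
noncomputable def PY (p : Fin 6 → ℝ) : ℝ := p 4 + (1/2) * p 0 * p 5

/-- `Q = (x² + y²)² + 16 z²`. -/
noncomputable def Qf (p : Fin 6 → ℝ) : ℝ := ((p 0)^2 + (p 1)^2)^2 + 16 * (p 2)^2

/-- The Kepler–Heisenberg Hamiltonian `H = (1/2)(P_X² + P_Y²) - (1/(8π)) Q^{-1/2}`. -/
noncomputable def Ham (p : Fin 6 → ℝ) : ℝ :=
  (1/2) * ((PX p)^2 + (PY p)^2) - (1/(8*Real.pi)) * (Qf p) ^ (-(1/2) : ℝ)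

/-- A solution of the Kepler–Heisenberg system: a differentiable curve on an open
interval (open preconnected set) `I`, whose position component never vanishes, and
which satisfies Hamilton's equations for `Ham`. -/
def IsSolutionOn (c : ℝ → Fin 6 → ℝ) (I : Set ℝ) : Prop :=
  IsOpen I ∧ IsPreconnected I ∧
  ∀ t ∈ I,
    (¬ (c t 0 = 0 ∧ c t 1 = 0 ∧ c t 2 = 0)) ∧
    HasDerivAt (fun τ => c τ 0) (fderiv ℝ Ham (c t) (Pi.single 3 1)) t ∧
    HasDerivAt (fun τ => c τ 1) (fderiv ℝ Ham (c t) (Pi.single 4 1)) t ∧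
    HasDerivAt (fun τ => c τ 2) (fderiv ℝ Ham (c t) (Pi.single 5 1)) t ∧
    HasDerivAt (fun τ => c τ 3) (-(fderiv ℝ Ham (c t) (Pi.single 0 1))) t ∧
    HasDerivAt (fun τ => c τ 4) (-(fderiv ℝ Ham (c t) (Pi.single 1 1))) t ∧
    HasDerivAt (fun τ => c τ 5) (-(fderiv ℝ Ham (c t) (Pi.single 2 1))) t

open Set

lemma Qf_pos (p : Fin 6 → ℝ) (h : ¬ (p 0 = 0 ∧ p 1 = 0 ∧ p 2 = 0)) : 0 < Qf p := by
  unfold Qf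
  rcases (by tauto : p 0 ≠ 0 ∨ p 1 ≠ 0 ∨ p 2 ≠ 0) with h | h | h <;> positivity

lemma ham_fderiv (p : Fin 6 → ℝ) (hp : Qf p ≠ 0) (v : Fin 6 → ℝ) :
    fderiv ℝ Ham p v =
      PX p * (v 3 - (1/2) * (v 1 * p 5 + p 1 * v 5))
      + PY p * (v 4 + (1/2) * (v 0 * p 5 + p 0 * v 5))
      + (1/(16*Real.pi)) * (Qf p) ^ (-(3/2) : ℝ) *
          (2 * ((p 0)^2 + (p 1)^2) * (2 * p 0 * v 0 + 2 * p 1 * v 1) + 32 * p 2 * v 2) := by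
  have h : ∀ i : Fin 6, HasFDerivAt (fun q : Fin 6 → ℝ => q i)
      (ContinuousLinearMap.proj i : (Fin 6 → ℝ) →L[ℝ] ℝ) p :=
    fun i => (ContinuousLinearMap.proj i : (Fin 6 → ℝ) →L[ℝ] ℝ).hasFDerivAt
  have hPX : HasFDerivAt PX _ p := (h 3).sub (((hasFDerivAt_const (1/2 : ℝ) p).mul (h 1)).mul (h 5))
  have hPY : HasFDerivAt PY _ p := (h 4).add (((hasFDerivAt_const (1/2 : ℝ) p).mul (h 0)).mul (h 5))
  have hQeq : Qf = fun q : Fin 6 → ℝ =>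
      (q 0 * q 0 + q 1 * q 1) * (q 0 * q 0 + q 1 * q 1) + (16 : ℝ) * (q 2 * q 2) := by
    funext q; unfold Qf; ring
  have hQ : HasFDerivAt Qf _ p := hQeq ▸ (show HasFDerivAt (fun q : Fin 6 → ℝ =>
        (q 0 * q 0 + q 1 * q 1) * (q 0 * q 0 + q 1 * q 1) + (16 : ℝ) * (q 2 * q 2)) _ p from
    ((((h 0).mul (h 0)).add ((h 1).mul (h 1))).mul (((h 0).mul (h 0)).add ((h 1).mul (h 1)))).add
      ((hasFDerivAt_const (16 : ℝ) p).mul ((h 2).mul (h 2))))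
  have hrpow := (Real.hasDerivAt_rpow_const (x := Qf p) (p := (-(1/2) : ℝ))
    (Or.inl hp)).comp_hasFDerivAt p hQ
  have hHeq : Ham = fun q : Fin 6 → ℝ =>
      (1/2 : ℝ) * (PX q * PX q + PY q * PY q) - (1/(8*Real.pi)) * (Qf q) ^ (-(1/2) : ℝ) := by
    funext q; unfold Ham; ring
  have hH : HasFDerivAt Ham _ p := hHeq ▸ (show HasFDerivAt (fun q : Fin 6 → ℝ =>
        (1/2 : ℝ) * (PX q * PX q + PY q * PY q) - (1/(8*Real.pi)) * (Qf q) ^ (-(1/2) : ℝ)) _ p from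
    (((hasFDerivAt_const (1/2 : ℝ) p).mul ((hPX.mul hPX).add (hPY.mul hPY))).sub
      ((hasFDerivAt_const (1/(8*Real.pi)) p).mul hrpow)))
  rw [hH.fderiv]
  have he : (-(1/2) : ℝ) - 1 = -(3/2) := by norm_num
  simp only [he, ContinuousLinearMap.sub_apply, ContinuousLinearMap.add_apply,
    ContinuousLinearMap.smul_apply, ContinuousLinearMap.coe_smul', Pi.smul_apply,
    ContinuousLinearMap.proj_apply, smul_eq_mul, ContinuousLinearMap.zero_apply,
    ContinuousLinearMap.coe_zero, Pi.zero_apply, Pi.mul_apply, Pi.add_apply, Pi.sub_apply]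
  unfold PX PY Qf
  ring

lemma key_derivs (c : ℝ → Fin 6 → ℝ) (I : Set ℝ) (hc : IsSolutionOn c I)
    (t : ℝ) (ht : t ∈ I) :
    HasDerivAt (fun τ => c τ 2)
      ((c t 0 * c t 4 - c t 1 * c t 3)/2 + ((c t 0)^2 + (c t 1)^2)/4 * c t 5) t ∧
    HasDerivAt (fun τ => c τ 5)
      (-((2/Real.pi) * (Qf (c t)) ^ (-(3/2) : ℝ) * c t 2)) t ∧
    HasDerivAt (fun τ => c τ 0 * c τ 4 - c τ 1 * c τ 3) 0 t := by
  obtain ⟨_, _, hsol⟩ := hc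
  obtain ⟨hne, hx, hy, hz, hp3, hp4, hp5⟩ := hsol t ht
  have hQ : Qf (c t) ≠ 0 := (Qf_pos (c t) hne).ne'
  have hs : ∀ (i j : Fin 6), Pi.single (M := fun _ : Fin 6 => ℝ) i 1 j = if j = i then 1 else 0 :=
    fun i j => Pi.single_apply i 1 j
  rw [ham_fderiv _ hQ] at hx hy hz hp3 hp4 hp5
  simp only [hs] at hx hy hz hp3 hp4 hp5
  simp only [Fin.reduceEq, reduceIte, if_true, if_false] at hx hy hz hp3 hp4 hp5
  norm_num at hx hy hz hp3 hp4 hp5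
  refine ⟨?_, ?_, ?_⟩
  · convert hz using 1
    unfold PX PY; ring
  · convert hp5 using 1
    ring
  · have := ((hx.mul hp4).sub (hy.mul hp3))
    refine this.congr_deriv ?_
    unfold PX PY; ring

lemma gronwall_zero {g g' : ℝ → ℝ} {a b K : ℝ}
    (hcont : ContinuousOn g (Icc a b))
    (hd : ∀ t ∈ Ico a b, HasDerivWithinAt g (g' t) (Ici t) t)
    (ha : g a = 0) (hbound : ∀ t ∈ Ico a b, |g' t| ≤ K * |g t|) :
    ∀ t ∈ Icc a b, g t = 0 := by
  intro t htc
  have h := norm_le_gronwallBound_of_norm_deriv_right_le (δ := 0) (ε := 0) (K := K)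
    hcont hd (by simp [ha]) (by intro s hs; simpa using hbound s hs) t htc
  rw [gronwallBound_ε0_δ0] at h
  simpa using le_antisymm (by simpa using h) (norm_nonneg (g t))

lemma bound_aux (z p l b B : ℝ) (hb : |b| ≤ B) :
    |z*l + b*(z*p)| ≤ (1+B) * (z*z + p*p + l*l) := by
  obtain ⟨h1, h2⟩ := abs_le.mp hb
  have hB : 0 ≤ B := le_trans (abs_nonneg b) hb
  rw [abs_le]
  constructor <;>
  nlinarith [sq_nonneg (z+l), sq_nonneg (z-l), sq_nonneg (z+p), sq_nonneg (z-p),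
    mul_nonneg (by linarith : (0:ℝ) ≤ B - b) (sq_nonneg (z+p)),
    mul_nonneg (by linarith : (0:ℝ) ≤ B - b) (sq_nonneg (z-p)),
    mul_nonneg (by linarith : (0:ℝ) ≤ B + b) (sq_nonneg (z+p)),
    mul_nonneg (by linarith : (0:ℝ) ≤ B + b) (sq_nonneg (z-p))]

/-- Auxiliary quantity `g = z² + p_z² + L²`. -/
noncomputable def gg (c : ℝ → Fin 6 → ℝ) (t : ℝ) : ℝ :=
  c t 2 * c t 2 + c t 5 * c t 5
    + (c t 0 * c t 4 - c t 1 * c t 3) * (c t 0 * c t 4 - c t 1 * c t 3)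

/-- Auxiliary coefficient `b`. -/
noncomputable def bb (c : ℝ → Fin 6 → ℝ) (t : ℝ) : ℝ :=
  ((c t 0)^2 + (c t 1)^2)/2 - (4/Real.pi) * (Qf (c t)) ^ (-(3/2) : ℝ)

lemma gg_nonneg (c : ℝ → Fin 6 → ℝ) (t : ℝ) : 0 ≤ gg c t := by
  unfold gg; nlinarith [mul_self_nonneg (c t 2), mul_self_nonneg (c t 5),
    mul_self_nonneg (c t 0 * c t 4 - c t 1 * c t 3)]

lemma gg_eq_zero (c : ℝ → Fin 6 → ℝ) (t : ℝ) (h : gg c t = 0) :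
    c t 2 = 0 ∧ c t 5 = 0 ∧ c t 0 * c t 4 - c t 1 * c t 3 = 0 := by
  unfold gg at h
  refine ⟨?_, ?_, ?_⟩ <;>
  nlinarith [mul_self_nonneg (c t 2), mul_self_nonneg (c t 5),
    mul_self_nonneg (c t 0 * c t 4 - c t 1 * c t 3)]

lemma gg_hasDerivAt (c : ℝ → Fin 6 → ℝ) (I : Set ℝ) (hc : IsSolutionOn c I)
    (t : ℝ) (ht : t ∈ I) :
    HasDerivAt (gg c)
      (c t 2 * (c t 0 * c t 4 - c t 1 * c t 3) + bb c t * (c t 2 * c t 5)) t := by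
  obtain ⟨hz, hp5, hL⟩ := key_derivs c I hc t ht
  have H := ((hz.mul hz).add (hp5.mul hp5)).add (hL.mul hL)
  have : gg c = fun τ => c τ 2 * c τ 2 + c τ 5 * c τ 5
      + (c τ 0 * c τ 4 - c τ 1 * c τ 3) * (c τ 0 * c τ 4 - c τ 1 * c τ 3) := rfl
  rw [this]
  refine H.congr_deriv ?_
  unfold bb
  ring

lemma coord_contAt (c : ℝ → Fin 6 → ℝ) (I : Set ℝ) (hc : IsSolutionOn c I)
    (t : ℝ) (ht : t ∈ I) (i : Fin 6) : ContinuousAt (fun τ => c τ i) t := by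
  obtain ⟨_, _, hsol⟩ := hc
  obtain ⟨_, h0, h1, h2, h3, h4, h5⟩ := hsol t ht
  fin_cases i
  exacts [h0.continuousAt, h1.continuousAt, h2.continuousAt, h3.continuousAt,
    h4.continuousAt, h5.continuousAt]

lemma gg_contAt (c : ℝ → Fin 6 → ℝ) (I : Set ℝ) (hc : IsSolutionOn c I)
    (t : ℝ) (ht : t ∈ I) : ContinuousAt (gg c) t := by
  have h := coord_contAt c I hc t ht
  exact (((h 2).mul (h 2)).add ((h 5).mul (h 5))).add
    ((((h 0).mul (h 4)).sub ((h 1).mul (h 3))).mul (((h 0).mul (h 4)).sub ((h 1).mul (h 3))))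

lemma bb_contAt (c : ℝ → Fin 6 → ℝ) (I : Set ℝ) (hc : IsSolutionOn c I)
    (t : ℝ) (ht : t ∈ I) : ContinuousAt (bb c) t := by
  have h := coord_contAt c I hc t ht
  have hQc : ContinuousAt (fun τ => Qf (c τ)) t := by
    unfold Qf
    exact ((((h 0).pow 2).add ((h 1).pow 2)).pow 2).add (continuousAt_const.mul ((h 2).pow 2))
  have hQne : Qf (c t) ≠ 0 := (Qf_pos (c t) (hc.2.2 t ht).1).ne'
  have hr : ContinuousAt (fun τ => (Qf (c τ)) ^ (-(3/2) : ℝ)) t :=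
    hQc.rpow_const (Or.inl hQne)
  unfold bb
  exact ((((h 0).pow 2).add ((h 1).pow 2)).div_const 2).sub (continuousAt_const.mul hr)

/-- The set `{z = 0, p_z = 0, x p_y - y p_x = 0}` is invariant under the
Kepler–Heisenberg flow. -/
theorem kh_invariant_submanifold (c : ℝ → Fin 6 → ℝ) (I : Set ℝ)
    (hc : IsSolutionOn c I) (t₀ : ℝ) (ht₀ : t₀ ∈ I)
    (hz : c t₀ 2 = 0) (hpz : c t₀ 5 = 0)
    (hang : c t₀ 0 * c t₀ 4 - c t₀ 1 * c t₀ 3 = 0) :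
    ∀ t ∈ I, c t 2 = 0 ∧ c t 5 = 0 ∧ c t 0 * c t 4 - c t 1 * c t 3 = 0 := by
  obtain ⟨hIopen, hIconn, hsol⟩ := hc
  have hc' : IsSolutionOn c I := ⟨hIopen, hIconn, hsol⟩
  set S : Set ℝ := {t | t ∈ I ∧ gg c t = 0} with hSdef
  set U : Set ℝ := {t | t ∈ I ∧ gg c t ≠ 0} with hUdef
  -- derivative function for gg
  set D : ℝ → ℝ := fun t => c t 2 * (c t 0 * c t 4 - c t 1 * c t 3) + bb c t * (c t 2 * c t 5)
    with hDdef
  -- S is open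
  have hSopen : IsOpen S := by
    rw [Metric.isOpen_iff]
    rintro t₁ ⟨ht₁, hg₁⟩
    -- bound for bb near t₁
    have hbc := bb_contAt c I hc' t₁ ht₁
    have hev : ∀ᶠ s in nhds t₁, s ∈ I ∧ |bb c s| ≤ |bb c t₁| + 1 := by
      apply (hIopen.eventually_mem ht₁).and
      have h1 := Metric.tendsto_nhds.mp hbc.tendsto 1 one_pos
      filter_upwards [h1] with s hs
      rw [Real.dist_eq] at hs
      calc |bb c s| = |(bb c s - bb c t₁) + bb c t₁| := by ring_nf
        _ ≤ |bb c s - bb c t₁| + |bb c t₁| := abs_add_le _ _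
        _ ≤ |bb c t₁| + 1 := by linarith
    obtain ⟨δ, hδpos, hball⟩ := Metric.eventually_nhds_iff_ball.mp hev
    set B := |bb c t₁| + 1 with hBdef
    set K := 1 + B with hKdef
    refine ⟨δ/2, by positivity, ?_⟩
    -- main claim: gg c = 0 on Icc (t₁ - δ/2) (t₁ + δ/2)
    have hsub : Icc (t₁ - δ/2) (t₁ + δ/2) ⊆ Metric.ball t₁ δ := by
      intro s hs
      rw [Metric.mem_ball, Real.dist_eq, abs_lt]
      constructor <;> [linarith [hs.1]; linarith [hs.2]]
    have hmemI : ∀ s ∈ Icc (t₁ - δ/2) (t₁ + δ/2), s ∈ I := fun s hs => (hball s (hsub hs)).1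
    have hmemB : ∀ s ∈ Icc (t₁ - δ/2) (t₁ + δ/2), |bb c s| ≤ B :=
      fun s hs => (hball s (hsub hs)).2
    have hbnd : ∀ s ∈ Icc (t₁ - δ/2) (t₁ + δ/2), |D s| ≤ K * |gg c s| := by
      intro s hs
      rw [abs_of_nonneg (gg_nonneg c s)]
      exact bound_aux (c s 2) (c s 5) (c s 0 * c s 4 - c s 1 * c s 3) (bb c s) B
        (hmemB s hs)
    -- forward
    have hfor : ∀ s ∈ Icc t₁ (t₁ + δ/2), gg c s = 0 := by
      apply gronwall_zero (g' := D) (K := K)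
      · intro s hs
        exact (gg_contAt c I hc' s (hmemI s ⟨by linarith [hs.1], hs.2⟩)).continuousWithinAt
      · intro s hs
        exact (gg_hasDerivAt c I hc' s (hmemI s ⟨by linarith [hs.1], le_of_lt hs.2⟩)).hasDerivWithinAt
      · exact hg₁
      · intro s hs
        exact hbnd s ⟨by linarith [hs.1], le_of_lt hs.2⟩
    -- backward, via reflection
    have hback : ∀ s ∈ Icc t₁ (t₁ + δ/2), gg c (2*t₁ - s) = 0 := by
      have hmem' : ∀ s ∈ Icc t₁ (t₁ + δ/2), (2*t₁ - s) ∈ Icc (t₁ - δ/2) (t₁ + δ/2) := by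
        intro s hs
        constructor <;> [linarith [hs.2]; linarith [hs.1]]
      apply gronwall_zero (g' := fun s => -(D (2*t₁ - s))) (K := K)
      · intro s hs
        have h1 : ContinuousAt (fun s : ℝ => gg c (2*t₁ - s)) s := by
          have := (gg_contAt c I hc' (2*t₁ - s) (hmemI _ (hmem' s hs)))
          exact this.comp ((continuous_const.sub continuous_id).continuousAt)
        exact h1.continuousWithinAt
      · intro s hs
        have hs' : s ∈ Icc t₁ (t₁ + δ/2) := ⟨hs.1, le_of_lt hs.2⟩
        have hD := gg_hasDerivAt c I hc' (2*t₁ - s) (hmemI _ (hmem' s hs'))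
        have hσ : HasDerivAt (fun x : ℝ => 2*t₁ - x) (-1) s := (hasDerivAt_id s).const_sub (2*t₁)
        have := hD.comp s hσ
        have heq : D (2*t₁ - s) * (-1) = -(D (2*t₁ - s)) := by ring
        rw [heq] at this
        exact this.hasDerivWithinAt
      · show gg c (2*t₁ - t₁) = 0
        rw [show 2*t₁ - t₁ = t₁ by ring]
        exact hg₁
      · intro s hs
        have hs' : s ∈ Icc t₁ (t₁ + δ/2) := ⟨hs.1, le_of_lt hs.2⟩
        rw [abs_neg]
        exact hbnd (2*t₁ - s) (hmem' s hs')
    -- combine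
    intro u hu
    rw [Metric.mem_ball, Real.dist_eq] at hu
    have huI : u ∈ I := hmemI u ⟨by cases abs_lt.mp hu; linarith, by cases abs_lt.mp hu; linarith⟩
    refine ⟨huI, ?_⟩
    rcases le_total t₁ u with h | h
    · exact hfor u ⟨h, by cases abs_lt.mp hu; linarith⟩
    · have := hback (2*t₁ - u) ⟨by linarith, by cases abs_lt.mp hu; linarith⟩
      simpa using this
  -- U is open
  have hUopen : IsOpen U := by
    rw [isOpen_iff_mem_nhds]
    rintro t₁ ⟨ht₁, hg₁⟩
    have := (hIopen.eventually_mem ht₁).and ((gg_contAt c I hc' t₁ ht₁).eventually_ne hg₁)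
    exact this
  -- cover
  have hcover : I ⊆ S ∪ U := by
    intro t ht
    by_cases h : gg c t = 0
    · exact Or.inl ⟨ht, h⟩
    · exact Or.inr ⟨ht, h⟩
  have hS0 : gg c t₀ = 0 := by
    unfold gg
    rw [hz, hpz, hang]
    ring
  intro t ht
  by_contra hcon
  have hgt : gg c t ≠ 0 := fun h => hcon (gg_eq_zero c t h)
  obtain ⟨s, hsI, hsS, hsU⟩ := hIconn S U hSopen hUopen hcover ⟨t₀, ht₀, ht₀, hS0⟩
    ⟨t, ht, ht, hgt⟩
  exact hsU.2 hsS.2
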